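/- arXiv:1411.2240 — 7 statements merged into one kernel-verified Lean document; each statement's English description precedes it below -/
import Mathlib

section
/- Let k be a field and A a k-finite category. Let D : A ≌ A^op be a k-linear equivalence such that every simple object of A is self-dual, and let P be a projective self-dual object of A. Set R := (End_A(P))^op, so that for each object X, Hom_A(P, X) is a left R-module (via precomposition with endomorphisms of P) and Hom_A(X, P) is a right R-module (via postcomposition). Assume R, which is a finite-dimensional k-algebra, is a symmetric Frobenius k-algebra. Then there is an isomorphism of functors from A to the category of left R-modules between X ↦ Hom_A(P, X) and X ↦ Hom_k(Hom_A(X, P), k), where the k-linear dual of the right R-module Hom_A(X, P) carries its induced left R-module structure. -/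
open CategoryTheory Limits

/-- A symmetric Frobenius form on a `k`-algebra `R`: a `k`-bilinear form that is
symmetric, nondegenerate and associative (`B (x * y) z = B x (y * z)`). -/
structure SymmetricFrobeniusForm (k R : Type*) [Field k] [Ring R] [Algebra k R] where
  B : R →ₗ[k] R →ₗ[k] k
  symmetric : ∀ x y, B x y = B y x
  nondegenerate : ∀ x, (∀ y, B x y = 0) → x = 0
  assoc : ∀ x y z, B (x * y) z = B x (y * z)

/-- `R` is a symmetric Frobenius `k`-algebra: it is finite-dimensional over `k` and
admits a symmetric, nondegenerate, associative `k`-bilinear form. -/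
def IsSymmetricFrobenius (k R : Type*) [Field k] [Ring R] [Algebra k R] : Prop :=
  FiniteDimensional k R ∧ Nonempty (SymmetricFrobeniusForm k R)

/-- An object `X` of an abelian category has a finite composition series: a finite chain
`0 = X₀ ↪ X₁ ↪ ⋯ ↪ Xₙ = X` of subobjects (monomorphisms) whose successive quotients
(cokernels) are simple. -/
def HasFiniteCompositionSeries {C : Type*} [Category C] [Abelian C] (X : C) : Prop :=
  ∃ (n : ℕ) (F : Fin (n + 1) → C) (f : ∀ i : Fin n, F i.castSucc ⟶ F i.succ),
    IsZero (F 0) ∧ Nonempty (F (Fin.last n) ≅ X) ∧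
      ∀ i : Fin n, Mono (f i) ∧ Simple (cokernel (f i))

/-- A nonzero object with a finite composition series has a simple subobject. -/
lemma exists_simple_subobject_aux {C : Type*} [Category C] [Abelian C] {X : C}
    (h : HasFiniteCompositionSeries X) (hX : ¬ IsZero X) :
    ∃ (S : C) (s : S ⟶ X), Simple S ∧ Mono s := by
  obtain ⟨n, F, f, h0, ⟨iso⟩, hi⟩ := h
  have key : ∀ j : Fin (n + 1), IsZero (F j) ∨
      ∃ (S : C) (s : S ⟶ F j), Simple S ∧ Mono s := by
    intro j
    induction j using Fin.induction with
    | zero => exact Or.inl h0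
    | succ i ih =>
      rcases ih with hz | ⟨S, s, hS, hs⟩
      · right
        have hf0 : f i = 0 := hz.eq_of_src _ _
        haveI := (hi i).2
        have : Simple (F i.succ) :=
          Simple.of_iso ((cokernelIsoOfEq hf0 ≪≫ cokernelZeroIsoTarget).symm)
        exact ⟨F i.succ, 𝟙 _, this, inferInstance⟩
      · right
        haveI := (hi i).1
        exact ⟨S, s ≫ f i, hS, mono_comp _ _⟩
  rcases key (Fin.last n) with hz | ⟨S, s, hS, hs⟩
  · exact absurd (hz.of_iso iso.symm) hX
  · exact ⟨S, s ≫ iso.hom, hS, @mono_comp _ _ _ _ _ _ hs _ inferInstance⟩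

/-- A nonzero object with a finite composition series has a simple quotient. -/
lemma exists_simple_quotient_aux {C : Type*} [Category C] [Abelian C] {X : C}
    (h : HasFiniteCompositionSeries X) (hX : ¬ IsZero X) :
    ∃ (Q : C) (q : X ⟶ Q), Simple Q ∧ Epi q := by
  obtain ⟨n, F, f, h0, ⟨iso⟩, hi⟩ := h
  cases n with
  | zero => exact absurd (h0.of_iso iso.symm) hX
  | succ m =>
    haveI := (hi (Fin.last m)).2
    have e : (Fin.last m).succ = Fin.last (m + 1) := Fin.succ_last m
    refine ⟨cokernel (f (Fin.last m)),
      iso.inv ≫ eqToHom (congrArg F e.symm) ≫ cokernel.π (f (Fin.last m)),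
      inferInstance, ?_⟩
    infer_instance

/-- Let `k` be a field, `A` a `k`-finite category (a `k`-linear abelian
category in which every object has a finite composition series and all Hom-spaces are
finite-dimensional), `D : A ≌ Aᵒᵖ` a `k`-linear equivalence under which every simple
object is self-dual, and `P` a projective self-dual object. Assume that
`R := (End P)ᵐᵒᵖ` is a symmetric Frobenius `k`-algebra. Then the functors
`X ↦ Hom_A(P, X)` and `X ↦ Hom_k(Hom_A(X, P), k)` from `A` to left `R`-modules are
isomorphic: there is a family of `k`-linear equivalences
`e X : Hom(P, X) ≃ Hom_k(Hom(X, P), k)` which intertwines the left `R`-module structures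
(given by precomposition `f ↦ r ≫ f` on `Hom(P, X)`, and by dualizing the right
`R`-module structure `g ↦ g ≫ r` by postcomposition on `Hom(X, P)`) and which is
natural in `X`. -/
theorem hom_from_projective_iso_dual_hom_to_projective
    (k : Type*) [Field k] {A : Type*} [Category A] [Abelian A] [Linear k A]
    (hlen : ∀ X : A, HasFiniteCompositionSeries X)
    (hfin : ∀ X Y : A, FiniteDimensional k (X ⟶ Y))
    (D : A ≌ Aᵒᵖ) [D.functor.Additive]
    (hDlin : ∀ (X Y : A) (c : k) (f : X ⟶ Y),
      (D.functor.map (c • f)).unop = c • (D.functor.map f).unop)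
    (hsimple : ∀ S : A, Simple S → Nonempty ((D.functor.obj S).unop ≅ S))
    (P : A) [Projective P] (hP : Nonempty ((D.functor.obj P).unop ≅ P))
    (hfrob : IsSymmetricFrobenius k (CategoryTheory.End P)ᵐᵒᵖ) :
    ∃ e : ∀ X : A, (P ⟶ X) ≃ₗ[k] ((X ⟶ P) →ₗ[k] k),
      (∀ (X : A) (r : P ⟶ P) (f : P ⟶ X) (g : X ⟶ P),
        e X (r ≫ f) g = e X f (g ≫ r)) ∧
      (∀ (X Y : A) (φ : X ⟶ Y) (f : P ⟶ X) (g : Y ⟶ P),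
        e Y (f ≫ φ) g = e X f (φ ≫ g)) := by
  classical
  obtain ⟨-, ⟨Bf⟩⟩ := hfrob
  -- the trace functional
  set R := (CategoryTheory.End P)ᵐᵒᵖ with hR
  let lam : R →ₗ[k] k := Bf.B.flip 1
  have hBlam : ∀ a b : R, Bf.B a b = lam (a * b) := by
    intro a b
    show Bf.B a b = Bf.B (a * b) 1
    rw [Bf.assoc, mul_one]
  have htr : ∀ a b : R, lam (a * b) = lam (b * a) := by
    intro a b
    rw [← hBlam, ← hBlam, Bf.symmetric]
  have hop : ∀ r s : CategoryTheory.End P,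
      (MulOpposite.op r * MulOpposite.op s : R) = MulOpposite.op (r ≫ s) := fun _ _ => rfl
  -- transfer of nonzero homs via the duality
  have transfer : ∀ (X Y : A), ((D.functor.obj X).unop ≅ X) → ((D.functor.obj Y).unop ≅ Y) →
      ∀ u : X ⟶ Y, u ≠ 0 → ∃ v : Y ⟶ X, v ≠ 0 := by
    intro X Y iX iY u hu
    refine ⟨iY.inv ≫ (D.functor.map u).unop ≫ iX.hom, fun hv => hu ?_⟩
    have h1 : (D.functor.map u).unop = 0 := by
      have := congrArg (fun t => iY.hom ≫ t ≫ iX.inv) hv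
      simpa using this
    have h2 : D.functor.map u = 0 := by
      apply Quiver.Hom.unop_inj
      simpa using h1
    apply D.functor.map_injective
    simpa using h2
  -- `P` is injective
  haveI hPinj : Injective P := by
    haveI h1 : Projective (D.functor.obj P) := (D.map_projective_iff P).mpr ‹Projective P›
    haveI h2 : Injective ((D.functor.obj P).unop) := inferInstance
    exact Injective.of_iso hP.some h2
  -- the pairing kills the hom in each variable
  have hkillR : ∀ (X : A) (f : P ⟶ X),
      (∀ g : X ⟶ P, lam (MulOpposite.op (f ≫ g)) = 0) → ∀ g : X ⟶ P, f ≫ g = 0 := by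
    intro X f hf g
    have : MulOpposite.op (f ≫ g) = (0 : R) := by
      apply Bf.nondegenerate
      intro y
      rw [hBlam]
      conv_lhs => rw [← MulOpposite.op_unop y]
      rw [hop, Category.assoc]
      exact hf _
    exact MulOpposite.op_eq_zero_iff _ |>.mp this
  have hkillL : ∀ (X : A) (g : X ⟶ P),
      (∀ f : P ⟶ X, lam (MulOpposite.op (f ≫ g)) = 0) → ∀ f : P ⟶ X, f ≫ g = 0 := by
    intro X g hg f
    have : MulOpposite.op (f ≫ g) = (0 : R) := by
      apply Bf.nondegenerate
      intro y
      rw [hBlam, htr]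
      conv_lhs => rw [← MulOpposite.op_unop y]
      rw [hop, ← Category.assoc]
      exact hg _
    exact MulOpposite.op_eq_zero_iff _ |>.mp this
  -- geometric nondegeneracy, left slot
  have hgeomL : ∀ (X : A) (f : P ⟶ X), f ≠ 0 → ∃ g : X ⟶ P, f ≫ g ≠ 0 := by
    intro X f hf
    have hI : ¬ IsZero (Abelian.image f) := by
      intro hz
      apply hf
      rw [← Abelian.image.fac f, hz.eq_of_src (Abelian.image.ι f) 0, comp_zero]
    obtain ⟨Q, q, hQ, hq⟩ := exists_simple_quotient_aux (hlen _) hI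
    have hu : Abelian.factorThruImage f ≫ q ≠ 0 := by
      intro h0
      apply hQ.not_isZero
      rw [IsZero.iff_id_eq_zero]
      exact (cancel_epi (Abelian.factorThruImage f ≫ q)).mp (by simp [h0])
    obtain ⟨v, hv⟩ := transfer P Q hP.some (hsimple Q hQ).some _ hu
    refine ⟨Injective.factorThru (q ≫ v) (Abelian.image.ι f), ?_⟩
    have hfac : f ≫ Injective.factorThru (q ≫ v) (Abelian.image.ι f)
        = (Abelian.factorThruImage f ≫ q) ≫ v := by
      calc f ≫ Injective.factorThru (q ≫ v) (Abelian.image.ι f)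
          = (Abelian.factorThruImage f ≫ Abelian.image.ι f) ≫
              Injective.factorThru (q ≫ v) (Abelian.image.ι f) := by
            rw [Abelian.image.fac]
        _ = Abelian.factorThruImage f ≫ (Abelian.image.ι f ≫
              Injective.factorThru (q ≫ v) (Abelian.image.ι f)) := by rw [Category.assoc]
        _ = Abelian.factorThruImage f ≫ (q ≫ v) := by rw [Injective.comp_factorThru]
        _ = (Abelian.factorThruImage f ≫ q) ≫ v := by rw [Category.assoc]
    rw [hfac]
    intro h0
    exact hv ((cancel_epi (Abelian.factorThruImage f ≫ q)).mp (by simpa using h0))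
  -- geometric nondegeneracy, right slot
  have hgeomR : ∀ (X : A) (g : X ⟶ P), g ≠ 0 → ∃ f : P ⟶ X, f ≫ g ≠ 0 := by
    intro X g hg
    have hI : ¬ IsZero (Abelian.image g) := by
      intro hz
      apply hg
      rw [← Abelian.image.fac g, hz.eq_of_src (Abelian.image.ι g) 0, comp_zero]
    obtain ⟨S, s, hS, hs⟩ := exists_simple_subobject_aux (hlen _) hI
    haveI := hs
    have hu : s ≫ Abelian.image.ι g ≠ 0 := by
      intro h0
      apply hS.not_isZero
      rw [IsZero.iff_id_eq_zero]
      exact (cancel_mono (s ≫ Abelian.image.ι g)).mp (by simp [h0])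
    obtain ⟨v, hv⟩ := transfer S P (hsimple S hS).some hP.some _ hu
    refine ⟨Projective.factorThru (v ≫ s) (Abelian.factorThruImage g), ?_⟩
    have hfac : Projective.factorThru (v ≫ s) (Abelian.factorThruImage g) ≫ g
        = v ≫ (s ≫ Abelian.image.ι g) := by
      calc Projective.factorThru (v ≫ s) (Abelian.factorThruImage g) ≫ g
          = Projective.factorThru (v ≫ s) (Abelian.factorThruImage g) ≫
              (Abelian.factorThruImage g ≫ Abelian.image.ι g) := by
            rw [Abelian.image.fac]
        _ = (Projective.factorThru (v ≫ s) (Abelian.factorThruImage g) ≫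
              Abelian.factorThruImage g) ≫ Abelian.image.ι g := by rw [Category.assoc]
        _ = (v ≫ s) ≫ Abelian.image.ι g := by rw [Projective.factorThru_comp]
        _ = v ≫ (s ≫ Abelian.image.ι g) := by rw [Category.assoc]
    rw [hfac]
    intro h0
    exact hv ((cancel_mono (s ≫ Abelian.image.ι g)).mp (by simpa using h0))
  -- the bilinear pairings
  let pair : ∀ X : A, (P ⟶ X) →ₗ[k] ((X ⟶ P) →ₗ[k] k) := fun X =>
    LinearMap.mk₂ k (fun f g => lam (MulOpposite.op (f ≫ g)))
      (by intros; simp [Preadditive.add_comp, Preadditive.comp_add, Linear.smul_comp, Linear.comp_smul])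
      (by intros; simp [Preadditive.add_comp, Preadditive.comp_add, Linear.smul_comp, Linear.comp_smul])
      (by intros; simp [Preadditive.add_comp, Preadditive.comp_add, Linear.smul_comp, Linear.comp_smul])
      (by intros; simp [Preadditive.add_comp, Preadditive.comp_add, Linear.smul_comp, Linear.comp_smul])
  let pair' : ∀ X : A, (X ⟶ P) →ₗ[k] ((P ⟶ X) →ₗ[k] k) := fun X =>
    LinearMap.mk₂ k (fun g f => lam (MulOpposite.op (f ≫ g)))
      (by intros; simp [Preadditive.add_comp, Preadditive.comp_add, Linear.smul_comp, Linear.comp_smul])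
      (by intros; simp [Preadditive.add_comp, Preadditive.comp_add, Linear.smul_comp, Linear.comp_smul])
      (by intros; simp [Preadditive.add_comp, Preadditive.comp_add, Linear.smul_comp, Linear.comp_smul])
      (by intros; simp [Preadditive.add_comp, Preadditive.comp_add, Linear.smul_comp, Linear.comp_smul])
  have injL : ∀ X : A, Function.Injective (pair X) := by
    intro X
    rw [injective_iff_map_eq_zero]
    intro f hf
    by_contra hf0
    obtain ⟨g, hg⟩ := hgeomL X f hf0
    exact hg (hkillR X f (fun g' => by
      have := DFunLike.congr_fun hf g'
      simpa [pair] using this) g)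
  have injR : ∀ X : A, Function.Injective (pair' X) := by
    intro X
    rw [injective_iff_map_eq_zero]
    intro g hg
    by_contra hg0
    obtain ⟨f, hf⟩ := hgeomR X g hg0
    exact hf (hkillL X g (fun f' => by
      have := DFunLike.congr_fun hg f'
      simpa [pair'] using this) f)
  -- equality of dimensions
  have hfr : ∀ X : A, Module.finrank k (P ⟶ X) = Module.finrank k ((X ⟶ P) →ₗ[k] k) := by
    intro X
    haveI := hfin P X
    haveI := hfin X P
    have d1 : Module.finrank k ((X ⟶ P) →ₗ[k] k) = Module.finrank k (X ⟶ P) :=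
      Subspace.dual_finrank_eq
    have d2 : Module.finrank k ((P ⟶ X) →ₗ[k] k) = Module.finrank k (P ⟶ X) :=
      Subspace.dual_finrank_eq
    have h1 : Module.finrank k (P ⟶ X) ≤ Module.finrank k ((X ⟶ P) →ₗ[k] k) :=
      LinearMap.finrank_le_finrank_of_injective (injL X)
    have h2 : Module.finrank k (X ⟶ P) ≤ Module.finrank k ((P ⟶ X) →ₗ[k] k) :=
      LinearMap.finrank_le_finrank_of_injective (injR X)
    omega
  haveI : ∀ X : A, FiniteDimensional k (P ⟶ X) := fun X => hfin P X
  haveI : ∀ X : A, FiniteDimensional k ((X ⟶ P) →ₗ[k] k) := fun X => by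
    haveI := hfin X P; infer_instance
  refine ⟨fun X => LinearMap.linearEquivOfInjective (pair X) (injL X) (hfr X), ?_, ?_⟩
  · intro X r f g
    rw [LinearMap.linearEquivOfInjective_apply, LinearMap.linearEquivOfInjective_apply]
    show lam (MulOpposite.op ((r ≫ f) ≫ g)) = lam (MulOpposite.op (f ≫ (g ≫ r)))
    rw [Category.assoc, ← hop r (f ≫ g), htr, hop, Category.assoc]
  · intro X Y φ f g
    rw [LinearMap.linearEquivOfInjective_apply, LinearMap.linearEquivOfInjective_apply]
    show lam (MulOpposite.op ((f ≫ φ) ≫ g)) = lam (MulOpposite.op (f ≫ (φ ≫ g)))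
    rw [Category.assoc]
end

section
/- Let k be a field and A a k-finite category. Let D : A ≌ A^op be a k-linear equivalence such that every simple object of A is self-dual, and let P be a projective self-dual object of A. Then for every object X of A, the k-vector spaces Hom_A(P, X) and Hom_A(X, P) have equal (finite) dimension over k. -/
open CategoryTheory Limits Module

section Aux

variable (k : Type*) [Field k]

private lemma aux_rank_ses {U V W : Type*} [AddCommGroup U] [AddCommGroup V] [AddCommGroup W]
    [Module k U] [Module k V] [Module k W] [FiniteDimensional k V]
    (φ : U →ₗ[k] V) (ψ : V →ₗ[k] W)
    (hφ : Function.Injective φ) (hψ : Function.Surjective ψ)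
    (h : LinearMap.ker ψ = LinearMap.range φ) :
    finrank k V = finrank k U + finrank k W := by
  have h1 := LinearMap.finrank_range_add_finrank_ker ψ
  rw [h, LinearMap.finrank_range_of_inj hφ, LinearMap.range_eq_top.mpr hψ, finrank_top] at h1
  omega

variable {A : Type*} [Category A] [Abelian A] [Linear k A]

private lemma aux_cov (P : A) [Projective P] (hfin : ∀ X Y : A, FiniteDimensional k (X ⟶ Y))
    {X Y : A} (f : X ⟶ Y) [Mono f] :
    finrank k (P ⟶ Y) = finrank k (P ⟶ X) + finrank k (P ⟶ cokernel f) := by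
  haveI := hfin P X; haveI := hfin P Y; haveI := hfin P (cokernel f)
  refine aux_rank_ses k (Linear.rightComp k P f) (Linear.rightComp k P (cokernel.π f)) ?_ ?_ ?_
  · intro u v h
    exact (cancel_mono f).mp h
  · intro g
    exact ⟨Projective.factorThru g (cokernel.π f), Projective.factorThru_comp _ _⟩
  · ext u
    constructor
    · intro h
      exact ⟨Abelian.monoLift f u h, Abelian.monoLift_comp f u h⟩
    · rintro ⟨v, rfl⟩
      show (v ≫ f) ≫ cokernel.π f = 0
      rw [Category.assoc, cokernel.condition, comp_zero]

private lemma aux_contrav (P : A) [Injective P] (hfin : ∀ X Y : A, FiniteDimensional k (X ⟶ Y))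
    {X Y : A} (f : X ⟶ Y) [Mono f] :
    finrank k (Y ⟶ P) = finrank k (cokernel f ⟶ P) + finrank k (X ⟶ P) := by
  haveI := hfin Y P; haveI := hfin X P; haveI := hfin (cokernel f) P
  refine aux_rank_ses k (Linear.leftComp k P (cokernel.π f)) (Linear.leftComp k P f) ?_ ?_ ?_
  · intro u v h
    exact (cancel_epi (cokernel.π f)).mp h
  · intro g
    exact ⟨Injective.factorThru g f, Injective.comp_factorThru _ _⟩
  · ext u
    constructor
    · intro h
      exact ⟨cokernel.desc f u h, cokernel.π_desc f u h⟩
    · rintro ⟨v, rfl⟩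
      show f ≫ cokernel.π f ≫ v = 0
      rw [cokernel.condition_assoc, zero_comp]

private lemma aux_dual_rank (D : A ≌ Aᵒᵖ) [D.functor.Additive]
    (hDlin : ∀ (X Y : A) (c : k) (f : X ⟶ Y),
      (D.functor.map (c • f)).unop = c • (D.functor.map f).unop)
    {S T : A} (eS : (D.functor.obj S).unop ≅ S) (eT : (D.functor.obj T).unop ≅ T) :
    finrank k (T ⟶ S) = finrank k (S ⟶ T) := by
  let L : (T ⟶ S) →ₗ[k] (S ⟶ T) :=
    { toFun := fun f => eS.inv ≫ (D.functor.map f).unop ≫ eT.hom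
      map_add' := by
        intro f g
        rw [D.functor.map_add, unop_add, Preadditive.add_comp, Preadditive.comp_add]
      map_smul' := by
        intro c f
        rw [hDlin, Linear.smul_comp, Linear.comp_smul]
        rfl }
  have hbij : Function.Bijective L := by
    constructor
    · intro f g h
      have h' : (D.functor.map f).unop = (D.functor.map g).unop := by
        have := (cancel_epi eS.inv).mp h
        exact (cancel_mono eT.hom).mp this
      exact D.functor.map_injective (Quiver.Hom.unop_inj h')
    · intro g
      refine ⟨D.functor.preimage (eS.hom ≫ g ≫ eT.inv).op, ?_⟩
      show eS.inv ≫ (D.functor.map (D.functor.preimage (eS.hom ≫ g ≫ eT.inv).op)).unop ≫ eT.hom = g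
      rw [D.functor.map_preimage]
      simp
  exact (LinearEquiv.ofBijective L hbij).finrank_eq

end Aux

/-- Let `k` be a field and `A` a `k`-finite category (a `k`-linear abelian
category in which every object has a finite composition series and all Hom-spaces are
finite-dimensional). Let `D : A ≌ Aᵒᵖ` be a `k`-linear equivalence (additive and
preserving scalar multiplication) under which every simple object is self-dual, and let
`P` be a projective self-dual object. Then for every object `X`, the `k`-vector spaces
`Hom(P, X)` and `Hom(X, P)` have equal (finite) dimension. -/
theorem finrank_hom_projective_selfdual_eq
    (k : Type*) [Field k] {A : Type*} [Category A] [Abelian A] [Linear k A]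
    (hlen : ∀ X : A, HasFiniteCompositionSeries X)
    (hfin : ∀ X Y : A, FiniteDimensional k (X ⟶ Y))
    (D : A ≌ Aᵒᵖ) [D.functor.Additive]
    (hDlin : ∀ (X Y : A) (c : k) (f : X ⟶ Y),
      (D.functor.map (c • f)).unop = c • (D.functor.map f).unop)
    (hsimple : ∀ S : A, Simple S → Nonempty ((D.functor.obj S).unop ≅ S))
    (P : A) [Projective P] (hP : Nonempty ((D.functor.obj P).unop ≅ P)) :
    ∀ X : A, Module.finrank k (P ⟶ X) = Module.finrank k (X ⟶ P) := by
  obtain ⟨eP⟩ := hP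
  haveI hproj : Projective (D.functor.obj P) := (D.map_projective_iff P).mpr ‹_›
  haveI : Injective ((D.functor.obj P).unop) := inferInstance
  haveI : Injective P := Injective.of_iso eP ‹_›
  intro X
  obtain ⟨n, F, f, h0, ⟨eX⟩, hstep⟩ := hlen X
  have main : ∀ i : Fin (n + 1), finrank k (P ⟶ F i) = finrank k (F i ⟶ P) := by
    intro i
    induction i using Fin.induction with
    | zero =>
      haveI := hfin P (F 0); haveI := hfin (F 0) P
      haveI : Subsingleton (P ⟶ F 0) := ⟨fun a b => h0.eq_of_tgt a b⟩
      haveI : Subsingleton (F 0 ⟶ P) := ⟨fun a b => h0.eq_of_src a b⟩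
      rw [finrank_zero_of_subsingleton, finrank_zero_of_subsingleton]
    | succ i ih =>
      obtain ⟨hm, hs⟩ := hstep i
      haveI := hm
      obtain ⟨eS⟩ := hsimple _ hs
      rw [aux_cov k P hfin (f i), aux_contrav k P hfin (f i), ih,
        aux_dual_rank k D hDlin eS eP]
      omega
  have h1 : finrank k (P ⟶ F (Fin.last n)) = finrank k (P ⟶ X) :=
    (Linear.homCongr k (Iso.refl P) eX).finrank_eq
  have h2 : finrank k (F (Fin.last n) ⟶ P) = finrank k (X ⟶ P) :=
    (Linear.homCongr k eX (Iso.refl P)).finrank_eq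
  rw [← h1, ← h2]
  exact main (Fin.last n)
end

section
/- Let k be a field, T and U k-linear categories with k-linear equivalences D_T : T ≌ T^op and D_U : U ≌ U^op, and let i_* : T → U be a k-linear functor with k-linear left adjoint i^* : U → T such that there is a natural isomorphism i_* ⋙ D_U ≅ D_T ⋙ (i_*)^op. Let P be a self-dual object of U (the object of U underlying D_U(P) is isomorphic to P) and suppose there is a natural isomorphism of functors from U to k-vector spaces between Z ↦ Hom_U(P, Z) and Z ↦ Hom_k(Hom_U(Z, P), k). Then for every object X of T there is a k-linear isomorphism Hom_U(P, i_*(X)) ≅ Hom_k(Hom_U(P, i_*(D X)), k), natural in X, where D X denotes the object of T underlying D_T(X). -/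
open CategoryTheory

section Aux

variable {k : Type*} [Field k] {T U : Type*} [Category T] [Category U]
  [Preadditive T] [Preadditive U] [Linear k T] [Linear k U]
  (DT : T ≌ Tᵒᵖ) (DU : U ≌ Uᵒᵖ)
  (ipush : T ⥤ U)
  (comm : ipush ⋙ DU.functor ≅ DT.functor ⋙ ipush.op)
  (P : U) (α : (DU.functor.obj P).unop ≅ P)

/-- auxiliary iso `DU⁻¹(op P) ≅ P` obtained from self-duality of `P`. -/
noncomputable def thetaAux : DU.inverse.obj (Opposite.op P) ≅ P :=
  DU.inverse.mapIso α.op ≪≫ (DU.unitIso.app P).symm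

/-- the key map `(P ⟶ i_*(D X)) → (i_* X ⟶ P)`. -/
noncomputable def mAux (X : T) (ξ : P ⟶ ipush.obj ((DT.functor.obj X).unop)) :
    ipush.obj X ⟶ P :=
  DU.unit.app (ipush.obj X) ≫
    DU.inverse.map ((ξ ≫ (comm.hom.app X).unop).op) ≫ (thetaAux DU P α).hom

end Aux

/-- Let `k` be a field, `T`, `U` `k`-linear categories with `k`-linear
equivalences `D_T : T ≌ Tᵒᵖ`, `D_U : U ≌ Uᵒᵖ`, and `i_* : T ⥤ U` a `k`-linear functor
with `k`-linear left adjoint `i^* : U ⥤ T` such that `i_* ⋙ D_U ≅ D_T ⋙ (i_*)ᵒᵖ`.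
Let `P` be a self-dual object of `U` together with a natural isomorphism between
`Z ↦ Hom_U(P, Z)` and `Z ↦ Hom_k(Hom_U(Z, P), k)`. Then for every `X : T` there is a
`k`-linear isomorphism `Hom_U(P, i_* X) ≅ Hom_k(Hom_U(P, i_*(D X)), k)`, natural
in `X`. -/
theorem hom_pushforward_dual_iso
    (k : Type*) [Field k] {T U : Type*} [Category T] [Category U]
    [Preadditive T] [Preadditive U] [Linear k T] [Linear k U]
    (DT : T ≌ Tᵒᵖ) (DU : U ≌ Uᵒᵖ) [DT.functor.Additive] [DU.functor.Additive]
    (hDTlin : ∀ (X Y : T) (c : k) (f : X ⟶ Y),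
      (DT.functor.map (c • f)).unop = c • (DT.functor.map f).unop)
    (hDUlin : ∀ (X Y : U) (c : k) (f : X ⟶ Y),
      (DU.functor.map (c • f)).unop = c • (DU.functor.map f).unop)
    (istar : U ⥤ T) (ipush : T ⥤ U)
    [istar.Additive] [istar.Linear k] [ipush.Additive] [ipush.Linear k]
    (adj : istar ⊣ ipush)
    (comm : ipush ⋙ DU.functor ≅ DT.functor ⋙ ipush.op)
    (P : U) (hP : Nonempty ((DU.functor.obj P).unop ≅ P))
    (η : ∀ Z : U, (P ⟶ Z) ≃ₗ[k] ((Z ⟶ P) →ₗ[k] k))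
    (hη : ∀ (Z Z' : U) (φ : Z ⟶ Z') (f : P ⟶ Z) (g : Z' ⟶ P),
      η Z' (f ≫ φ) g = η Z f (φ ≫ g)) :
    ∃ e : ∀ X : T,
        (P ⟶ ipush.obj X) ≃ₗ[k] ((P ⟶ ipush.obj ((DT.functor.obj X).unop)) →ₗ[k] k),
      ∀ (X Y : T) (φ : X ⟶ Y) (f : P ⟶ ipush.obj X)
        (ξ : P ⟶ ipush.obj ((DT.functor.obj Y).unop)),
        e Y (f ≫ ipush.map φ) ξ = e X f (ξ ≫ ipush.map (DT.functor.map φ).unop) := by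
  classical
  obtain ⟨α⟩ := hP
  -- key lemma: DU.inverse is k-linear on `.op`s of morphisms
  have linv : ∀ (A B : U) (c : k) (h : A ⟶ B),
      DU.inverse.map (c • h).op = c • DU.inverse.map h.op := by
    intro A B c h
    apply DU.functor.map_injective
    apply Quiver.Hom.unop_inj
    rw [hDUlin]
    rw [DU.fun_inv_map, DU.fun_inv_map]
    simp [Linear.smul_comp, Linear.comp_smul]
  -- additivity of DU.inverse on `.op`s
  have ainv : ∀ (A B : U) (h h' : A ⟶ B),
      DU.inverse.map (h + h').op = DU.inverse.map h.op + DU.inverse.map h'.op := by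
    intro A B h h'
    apply DU.functor.map_injective
    apply Quiver.Hom.unop_inj
    rw [DU.functor.map_add]
    rw [DU.fun_inv_map, DU.fun_inv_map, DU.fun_inv_map]
    simp
  -- naturality of mAux
  have hm_nat : ∀ (X Y : T) (φ : X ⟶ Y)
      (ξ : P ⟶ ipush.obj ((DT.functor.obj Y).unop)),
      mAux DT DU ipush comm P α X (ξ ≫ ipush.map (DT.functor.map φ).unop)
        = ipush.map φ ≫ mAux DT DU ipush comm P α Y ξ := by
    intro X Y φ ξ
    have hc := comm.hom.naturality φ
    have hc' : ipush.map (DT.functor.map φ).unop ≫ (comm.hom.app X).unop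
        = (comm.hom.app Y).unop ≫ (DU.functor.map (ipush.map φ)).unop := by
      have := congrArg Quiver.Hom.unop hc
      simpa using this.symm
    unfold mAux
    rw [Category.assoc, hc']
    rw [show (ξ ≫ (comm.hom.app Y).unop ≫ (DU.functor.map (ipush.map φ)).unop).op
        = DU.functor.map (ipush.map φ) ≫ (ξ ≫ (comm.hom.app Y).unop).op by
      rw [← Category.assoc, op_comp, Quiver.Hom.op_unop]]
    rw [DU.inverse.map_comp]
    have hu := DU.unit.naturality (ipush.map φ)
    simp only [Functor.id_map, Functor.comp_map] at hu
    simp only [Category.assoc]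
    rw [← reassoc_of% hu]
  -- bijectivity of mAux : explicit inverse
  have hm_bij : ∀ X : T, Function.Bijective (mAux DT DU ipush comm P α X) := by
    intro X
    refine Function.bijective_iff_has_inverse.mpr
      ⟨fun g => (comm.inv.app X ≫ DU.inverse.preimage
        (DU.unitIso.inv.app (ipush.obj X) ≫ g ≫ (thetaAux DU P α).inv)).unop, ?_, ?_⟩
    · intro ξ
      unfold mAux
      simp
    · intro g
      unfold mAux
      simp
  -- mAux as a linear equivalence
  have hm_add : ∀ (X : T) (ξ ξ' : P ⟶ ipush.obj ((DT.functor.obj X).unop)),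
      mAux DT DU ipush comm P α X (ξ + ξ')
        = mAux DT DU ipush comm P α X ξ + mAux DT DU ipush comm P α X ξ' := by
    intro X ξ ξ'
    unfold mAux
    rw [Preadditive.add_comp, ainv]
    simp [Preadditive.add_comp, Preadditive.comp_add]
  have hm_smul : ∀ (X : T) (c : k) (ξ : P ⟶ ipush.obj ((DT.functor.obj X).unop)),
      mAux DT DU ipush comm P α X (c • ξ)
        = c • mAux DT DU ipush comm P α X ξ := by
    intro X c ξ
    unfold mAux
    rw [Linear.smul_comp, linv]
    simp
  let μ : ∀ X : T,
      (P ⟶ ipush.obj ((DT.functor.obj X).unop)) ≃ₗ[k] (ipush.obj X ⟶ P) :=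
    fun X => LinearEquiv.ofBijective
      { toFun := mAux DT DU ipush comm P α X
        map_add' := hm_add X
        map_smul' := hm_smul X } (hm_bij X)
  refine ⟨fun X => (η (ipush.obj X)).trans (μ X).dualMap, ?_⟩
  intro X Y φ f ξ
  simp only [LinearEquiv.trans_apply, LinearEquiv.dualMap_apply]
  rw [hη]
  congr 1
  show _ = mAux DT DU ipush comm P α X (ξ ≫ ipush.map (DT.functor.map φ).unop)
  rw [hm_nat]
  rfl
end

section
/- Let T and U be categories with equivalences D_T : T ≌ T^op and D_U : U ≌ U^op that are involutions, let i_* : T → U be a functor with left adjoint i^* : U → T such that there is a natural isomorphism i_* ⋙ D_U ≅ D_T ⋙ (i_*)^op, and let i^! := D_U ⋙ (i^*)^op ⋙ (D_T)^{-1} : U → T. Suppose T is equipped with an auto-equivalence ⟦1⟧ (shift) and that for some integer n there is a natural isomorphism i^! ≅ i^* ⋙ ⟦n⟧. Then for every self-dual object Y of U (the object of U underlying D_U(Y) is isomorphic to Y), the object of T underlying D_T(i^*(Y)) is isomorphic to (i^*(Y))⟦n⟧. -/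
open CategoryTheory

/-- An equivalence `D : A ≌ Aᵒᵖ` is an involution: applying `D` twice (the composite of
`D` with the opposite of `D`, viewed as an endofunctor of `A`) is naturally isomorphic to
the identity functor of `A`. -/
def CategoryTheory.Equivalence.IsInvolution {A : Type*} [Category A] (D : A ≌ Aᵒᵖ) : Prop :=
  Nonempty (D.functor ⋙ D.functor.leftOp ≅ 𝟭 A)

/-- Let `T`, `U` be categories with involutive equivalences
`D_T : T ≌ Tᵒᵖ`, `D_U : U ≌ Uᵒᵖ`, let `i_* : T ⥤ U` have a left adjoint `i^* : U ⥤ T`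
with `i_* ⋙ D_U ≅ D_T ⋙ (i_*)ᵒᵖ`, and set `i^! := D_U ⋙ (i^*)ᵒᵖ ⋙ (D_T)⁻¹`. Suppose
`T` carries a shift and for some integer `n` there is a natural isomorphism
`i^! ≅ i^* ⋙ ⟦n⟧`. Then for every self-dual object `Y` of `U`, the object underlying
`D_T(i^* Y)` is isomorphic to `(i^* Y)⟦n⟧`. -/
theorem dual_pullback_selfdual_iso_shift
    {T U : Type*} [Category T] [Category U]
    (DT : T ≌ Tᵒᵖ) (DU : U ≌ Uᵒᵖ)
    (hDT : DT.IsInvolution) (hDU : DU.IsInvolution)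
    (istar : U ⥤ T) (ipush : T ⥤ U) (adj : istar ⊣ ipush)
    (comm : ipush ⋙ DU.functor ≅ DT.functor ⋙ ipush.op)
    [HasShift T ℤ] (n : ℤ)
    (hshift : DU.functor ⋙ istar.op ⋙ DT.inverse ≅ istar ⋙ shiftFunctor T n) :
    ∀ Y : U, Nonempty ((DU.functor.obj Y).unop ≅ Y) →
      Nonempty ((DT.functor.obj (istar.obj Y)).unop ≅
        (shiftFunctor T n).obj (istar.obj Y)) := by
  intro Y hY
  obtain ⟨e⟩ := hY
  obtain ⟨h⟩ := hDT
  -- `DT.functor.leftOp ≅ DT.inverse`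
  have key : DT.functor.leftOp ≅ DT.inverse :=
    (Functor.leftUnitor _).symm ≪≫
      Functor.isoWhiskerRight DT.counitIso.symm _ ≪≫
      Functor.associator _ _ _ ≪≫
      Functor.isoWhiskerLeft DT.inverse h ≪≫
      Functor.rightUnitor _
  exact ⟨(key.app (Opposite.op (istar.obj Y))) ≪≫
    DT.inverse.mapIso (Iso.op (istar.mapIso e)) ≪≫ hshift.app Y⟩
end

section
/- Let k be a field, T and U k-linear categories with k-linear involutive equivalences D_T : T ≌ T^op and D_U : U ≌ U^op, and i_* : T → U a k-linear functor with k-linear left adjoint i^* : U → T such that there is a natural isomorphism i_* ⋙ D_U ≅ D_T ⋙ (i_*)^op. Let i^! := D_U ⋙ (i^*)^op ⋙ (D_T)^{-1} : U → T, suppose T has a shift auto-equivalence ⟦1⟧ and that for some integer n there is a natural isomorphism i^! ≅ i^* ⋙ ⟦n⟧. Let P be a self-dual object of U with a natural isomorphism of functors from U to k-vector spaces between Z ↦ Hom_U(P, Z) and Z ↦ Hom_k(Hom_U(Z, P), k). Then for every self-dual object Y of U there is a k-linear isomorphism Hom_U(P, i_*(i^*(Y))) ≅ Hom_k(Hom_U(P,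 i_*((i^*(Y))⟦n⟧)), k). -/
open CategoryTheory

/-- The hom-space linear equivalence induced by a duality functor. -/
noncomputable def dualityHomEquiv (k : Type*) [Field k] {A : Type*} [Category A]
    [Preadditive A] [Linear k A] (D : A ≌ Aᵒᵖ) [D.functor.Additive]
    (hlin : ∀ (X Y : A) (c : k) (f : X ⟶ Y),
      (D.functor.map (c • f)).unop = c • (D.functor.map f).unop)
    (X Y : A) :
    (X ⟶ Y) ≃ₗ[k] ((D.functor.obj Y).unop ⟶ (D.functor.obj X).unop) where
  toFun f := (D.functor.map f).unop
  invFun g := D.functor.preimage g.op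
  left_inv f := by simp
  right_inv g := by simp
  map_add' f g := by simp
  map_smul' c f := hlin _ _ c f

/-- Let `k` be a field, `T`, `U` `k`-linear categories with `k`-linear
involutive equivalences `D_T : T ≌ Tᵒᵖ`, `D_U : U ≌ Uᵒᵖ`, and `i_* : T ⥤ U` a `k`-linear
functor with `k`-linear left adjoint `i^* : U ⥤ T` such that
`i_* ⋙ D_U ≅ D_T ⋙ (i_*)ᵒᵖ`. Let `i^! := D_U ⋙ (i^*)ᵒᵖ ⋙ (D_T)⁻¹`, suppose `T` has a
shift and `i^! ≅ i^* ⋙ ⟦n⟧` for some integer `n`. Let `P` be a self-dual object of `U`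
with a natural isomorphism between `Z ↦ Hom_U(P, Z)` and `Z ↦ Hom_k(Hom_U(Z, P), k)`.
Then for every self-dual object `Y` of `U` there is a `k`-linear isomorphism
`Hom_U(P, i_* i^* Y) ≅ Hom_k(Hom_U(P, i_*((i^* Y)⟦n⟧)), k)`. -/

theorem poincare_duality_pullback_selfdual
    (k : Type*) [Field k] {T U : Type*} [Category T] [Category U]
    [Preadditive T] [Preadditive U] [Linear k T] [Linear k U]
    (DT : T ≌ Tᵒᵖ) (DU : U ≌ Uᵒᵖ) [DT.functor.Additive] [DU.functor.Additive]
    (hDTlin : ∀ (X Y : T) (c : k) (f : X ⟶ Y),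
      (DT.functor.map (c • f)).unop = c • (DT.functor.map f).unop)
    (hDUlin : ∀ (X Y : U) (c : k) (f : X ⟶ Y),
      (DU.functor.map (c • f)).unop = c • (DU.functor.map f).unop)
    (hDT : DT.IsInvolution) (hDU : DU.IsInvolution)
    (istar : U ⥤ T) (ipush : T ⥤ U)
    [istar.Additive] [istar.Linear k] [ipush.Additive] [ipush.Linear k]
    (adj : istar ⊣ ipush)
    (comm : ipush ⋙ DU.functor ≅ DT.functor ⋙ ipush.op)
    [HasShift T ℤ] (n : ℤ)
    (hshift : DU.functor ⋙ istar.op ⋙ DT.inverse ≅ istar ⋙ shiftFunctor T n)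
    (P : U) (hP : Nonempty ((DU.functor.obj P).unop ≅ P))
    (η : ∀ Z : U, (P ⟶ Z) ≃ₗ[k] ((Z ⟶ P) →ₗ[k] k))
    (hη : ∀ (Z Z' : U) (φ : Z ⟶ Z') (f : P ⟶ Z) (g : Z' ⟶ P),
      η Z' (f ≫ φ) g = η Z f (φ ≫ g)) :
    ∀ Y : U, Nonempty ((DU.functor.obj Y).unop ≅ Y) →
      Nonempty ((P ⟶ ipush.obj (istar.obj Y)) ≃ₗ[k]
        ((P ⟶ ipush.obj ((shiftFunctor T n).obj (istar.obj Y))) →ₗ[k] k)) := by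
  intro Y hYne
  obtain ⟨hY⟩ := hYne
  obtain ⟨hPiso⟩ := hP
  obtain ⟨ι⟩ := hDT
  set X : T := istar.obj Y with hX
  -- `DT.inverse.obj (op X) ≅ (DT.functor.obj X).unop` from the involution
  have isoW : DT.inverse.obj (Opposite.op X) ≅ (DT.functor.obj X).unop :=
    DT.inverse.mapIso (ι.app X).op ≪≫ (DT.unitIso.app ((DT.functor.obj X).unop)).symm
  -- `(DT.functor.obj X).unop ≅ X⟦n⟧` via hshift and self-duality of Y
  have isoT : (DT.functor.obj X).unop ≅ (shiftFunctor T n).obj X :=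
    isoW.symm ≪≫ DT.inverse.mapIso (istar.mapIso hY).op ≪≫ hshift.app Y
  -- `(DU.functor.obj (ipush.obj X)).unop ≅ ipush.obj (X⟦n⟧)` via comm
  have iso1 : (DU.functor.obj (ipush.obj X)).unop ≅
      ipush.obj ((shiftFunctor T n).obj X) :=
    (comm.app X).unop.symm ≪≫ ipush.mapIso isoT
  -- linear equiv `(ipush X ⟶ P) ≃ (P ⟶ ipush (X⟦n⟧))`
  have e : (P ⟶ ipush.obj ((shiftFunctor T n).obj X)) ≃ₗ[k] (ipush.obj X ⟶ P) :=
    (dualityHomEquiv k DU hDUlin (ipush.obj X) P ≪≫ₗ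
      Linear.homCongr k hPiso iso1).symm
  exact ⟨η (ipush.obj X) ≪≫ₗ e.dualMap⟩
end

section
/- Let k be a field, and let T and U be k-linear categories equipped with k-linear involutive equivalences D_T : T ≌ T^op and D_U : U ≌ U^op, where U also carries a shift auto-equivalence ⟦1⟧. Let i^* : T → U be a k-linear functor and define i^! := D_T ⋙ (i^*)^op ⋙ (D_U)^{-1} : T → U. Assume that for some integer n there is a natural isomorphism i^! ≅ i^* ⋙ ⟦-n⟧. Let P be a self-dual object of U with a natural isomorphism of functors from U to k-vector spaces between Z ↦ Hom_U(P, Z) and Z ↦ Hom_k(Hom_U(Z, P), k). Then for every object X of T there is a k-linear isomorphism Hom_U(P, i^!(X)) ≅ Hom_k(Hom_U(P, (i^!(D X))⟦n⟧), k), natural in X, where D X denotes the object of T underlying D_T(X). -/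
open CategoryTheory

/-- Let `k` be a field, `T`, `U` `k`-linear categories with `k`-linear
involutive equivalences `D_T : T ≌ Tᵒᵖ`, `D_U : U ≌ Uᵒᵖ`, where `U` carries a shift.
Let `i^* : T ⥤ U` be a `k`-linear functor and `i^! := D_T ⋙ (i^*)ᵒᵖ ⋙ (D_U)⁻¹ : T ⥤ U`;
assume `i^! ≅ i^* ⋙ ⟦-n⟧` for some integer `n`. Let `P` be a self-dual object of `U` with
a natural isomorphism between `Z ↦ Hom_U(P, Z)` and `Z ↦ Hom_k(Hom_U(Z, P), k)`. Then for
every `X : T` there is a `k`-linear isomorphism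
`Hom_U(P, i^! X) ≅ Hom_k(Hom_U(P, (i^!(D X))⟦n⟧), k)`, natural in `X`. -/
theorem poincare_duality_shriek_natural
    (k : Type*) [Field k] {T U : Type*} [Category T] [Category U]
    [Preadditive T] [Preadditive U] [Linear k T] [Linear k U]
    (DT : T ≌ Tᵒᵖ) (DU : U ≌ Uᵒᵖ) [DT.functor.Additive] [DU.functor.Additive]
    (hDTlin : ∀ (X Y : T) (c : k) (f : X ⟶ Y),
      (DT.functor.map (c • f)).unop = c • (DT.functor.map f).unop)
    (hDUlin : ∀ (X Y : U) (c : k) (f : X ⟶ Y),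
      (DU.functor.map (c • f)).unop = c • (DU.functor.map f).unop)
    (hDT : DT.IsInvolution) (hDU : DU.IsInvolution)
    [HasShift U ℤ]
    (istar : T ⥤ U) [istar.Additive] [istar.Linear k] (n : ℤ)
    (hshift : DT.functor ⋙ istar.op ⋙ DU.inverse ≅ istar ⋙ shiftFunctor U (-n))
    (P : U) (hP : Nonempty ((DU.functor.obj P).unop ≅ P))
    (η : ∀ Z : U, (P ⟶ Z) ≃ₗ[k] ((Z ⟶ P) →ₗ[k] k))
    (hη : ∀ (Z Z' : U) (φ : Z ⟶ Z') (f : P ⟶ Z) (g : Z' ⟶ P),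
      η Z' (f ≫ φ) g = η Z f (φ ≫ g)) :
    ∃ e : ∀ X : T,
        (P ⟶ (DT.functor ⋙ istar.op ⋙ DU.inverse).obj X) ≃ₗ[k]
          ((P ⟶ (shiftFunctor U n).obj
            ((DT.functor ⋙ istar.op ⋙ DU.inverse).obj ((DT.functor.obj X).unop))) →ₗ[k] k),
      ∀ (X Y : T) (φ : X ⟶ Y) (f : P ⟶ (DT.functor ⋙ istar.op ⋙ DU.inverse).obj X)
        (ξ : P ⟶ (shiftFunctor U n).obj
          ((DT.functor ⋙ istar.op ⋙ DU.inverse).obj ((DT.functor.obj Y).unop))),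
        e Y (f ≫ (DT.functor ⋙ istar.op ⋙ DU.inverse).map φ) ξ =
          e X f (ξ ≫ (shiftFunctor U n).map
            ((DT.functor ⋙ istar.op ⋙ DU.inverse).map (DT.functor.map φ).unop)) := by
  obtain ⟨pIso⟩ := hP
  obtain ⟨ε⟩ := hDU
  set F : T ⥤ U := DT.functor ⋙ istar.op ⋙ DU.inverse with hF
  let c : F ⋙ shiftFunctor U n ≅ istar :=
    Functor.isoWhiskerRight hshift (shiftFunctor U n) ≪≫ Functor.associator _ _ _ ≪≫
      Functor.isoWhiskerLeft istar (shiftFunctorCompIsoId U (-n) n (by omega)) ≪≫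
      Functor.rightUnitor istar
  let ι : DU.inverse ≅ DU.functor.leftOp :=
    (Functor.rightUnitor DU.inverse).symm ≪≫ (Functor.isoWhiskerLeft DU.inverse ε).symm ≪≫
      (Functor.associator DU.inverse DU.functor DU.functor.leftOp).symm ≪≫
      Functor.isoWhiskerRight DU.counitIso DU.functor.leftOp ≪≫
      Functor.leftUnitor DU.functor.leftOp
  let θfun : ∀ X : T,
      (P ⟶ (shiftFunctor U n).obj (F.obj ((DT.functor.obj X).unop))) → (F.obj X ⟶ P) :=
    fun X g =>
      ι.hom.app ((DT.functor ⋙ istar.op).obj X) ≫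
        (DU.functor.map (g ≫ c.hom.app ((DT.functor.obj X).unop))).unop ≫ pIso.hom
  have θbij : ∀ X, Function.Bijective (θfun X) := by
    intro X
    let E1 : (P ⟶ (shiftFunctor U n).obj (F.obj ((DT.functor.obj X).unop))) ≃
        (P ⟶ istar.obj ((DT.functor.obj X).unop)) :=
      Iso.homCongr (Iso.refl P) (c.app ((DT.functor.obj X).unop))
    let E2 : (P ⟶ istar.obj ((DT.functor.obj X).unop)) ≃
        (DU.functor.obj P ⟶ DU.functor.obj (istar.obj ((DT.functor.obj X).unop))) :=
      DU.fullyFaithfulFunctor.homEquiv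
    let E3 : (DU.functor.obj P ⟶ DU.functor.obj (istar.obj ((DT.functor.obj X).unop))) ≃
        ((DU.functor.obj (istar.obj ((DT.functor.obj X).unop))).unop ⟶
          (DU.functor.obj P).unop) :=
      ⟨Quiver.Hom.unop, Quiver.Hom.op, fun _ => rfl, fun _ => rfl⟩
    let E4 : ((DU.functor.obj (istar.obj ((DT.functor.obj X).unop))).unop ⟶
          (DU.functor.obj P).unop) ≃ (F.obj X ⟶ P) :=
      Iso.homCongr ((ι.app ((DT.functor ⋙ istar.op).obj X)).symm) pIso
    have : θfun X = ⇑(E1.trans (E2.trans (E3.trans E4))) := by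
      funext g
      simp [θfun, E1, E2, E3, E4]
    rw [this]
    exact (E1.trans (E2.trans (E3.trans E4))).bijective
  let θlin : ∀ X : T,
      (P ⟶ (shiftFunctor U n).obj (F.obj ((DT.functor.obj X).unop))) →ₗ[k]
        (F.obj X ⟶ P) := fun X =>
    { toFun := θfun X
      map_add' := by
        intro g g'
        simp [θfun, Preadditive.add_comp, Preadditive.comp_add]
      map_smul' := by
        intro a g
        simp only [θfun, Linear.smul_comp, hDUlin, Linear.comp_smul, RingHom.id_apply] }
  let θ : ∀ X : T,
      (P ⟶ (shiftFunctor U n).obj (F.obj ((DT.functor.obj X).unop))) ≃ₗ[k]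
        (F.obj X ⟶ P) := fun X => LinearEquiv.ofBijective (θlin X) (θbij X)
  refine ⟨fun X => (η (F.obj X)).trans (θ X).dualMap, ?_⟩
  intro X Y φ f ξ
  have happ : ∀ (Z : T) g ξ',
      ((η (F.obj Z)).trans (θ Z).dualMap) g ξ' = η (F.obj Z) g (θfun Z ξ') := by
    intro Z g ξ'
    simp [θ, θlin, LinearEquiv.trans_apply]
  have key : F.map φ ≫ θfun Y ξ =
      θfun X (ξ ≫ (shiftFunctor U n).map (F.map (DT.functor.map φ).unop)) := by
    have hc := c.hom.naturality (DT.functor.map φ).unop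
    have hι := ι.hom.naturality (istar.op.map (DT.functor.map φ))
    simp only [Functor.comp_map, Functor.leftOp_map, Functor.op_map,
      Quiver.Hom.unop_op] at hc hι
    simp only [θfun, Category.assoc]
    rw [hc]
    simp only [hF, Functor.comp_obj, Functor.comp_map, Functor.op_map,
      Functor.map_comp, unop_comp, Category.assoc]
    have hFφ : F.map φ = DU.inverse.map ((istar.map (DT.functor.map φ).unop).op) := rfl
    rw [hFφ, reassoc_of% hι]
  rw [happ, happ, hη, key]
end

section
/- Let k be a field, and let T and U be k-linear categories equipped with k-linear involutive equivalences D_T : T ≌ T^op and D_U : U ≌ U^op, where U also carries a shift auto-equivalence ⟦1⟧. Let i^* : T → U be a k-linear functor and define i^! := D_T ⋙ (i^*)^op ⋙ (D_U)^{-1} : T → U. Assume that for some integer n there is a natural isomorphism i^! ≅ i^* ⋙ ⟦-n⟧. Let P be a self-dual object of U with a natural isomorphism of functors from U to k-vector spaces between Z ↦ Hom_U(P, Z) and Z ↦ Hom_k(Hom_U(Z, P), k). Then for every self-dual object X of T there is a k-linear isomorphism Hom_U(P, i^!(X)) ≅ Hom_k(Hom_U(P, (i^!(X))⟦n⟧),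 k). -/
open CategoryTheory

section Aux
variable (k : Type*) [Field k] {U : Type*} [Category U] [Preadditive U] [Linear k U]

/-- Hom congruence along isos, as a `k`-linear equivalence. -/
def homCongrLin {A A' B B' : U} (i : A ≅ A') (j : B ≅ B') :
    (A ⟶ B) ≃ₗ[k] (A' ⟶ B') where
  toFun f := i.inv ≫ f ≫ j.hom
  invFun g := i.hom ≫ g ≫ j.inv
  map_add' f g := by simp
  map_smul' c f := by simp
  left_inv f := by simp
  right_inv g := by simp

/-- Duality gives a `k`-linear equivalence on Hom spaces. -/
noncomputable def dualHomLin (DU : U ≌ Uᵒᵖ) [DU.functor.Additive]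
    (hDUlin : ∀ (X Y : U) (c : k) (f : X ⟶ Y),
      (DU.functor.map (c • f)).unop = c • (DU.functor.map f).unop)
    (A B : U) :
    (A ⟶ B) ≃ₗ[k] ((DU.functor.obj B).unop ⟶ (DU.functor.obj A).unop) where
  toFun f := (DU.functor.map f).unop
  invFun g := DU.functor.preimage g.op
  map_add' f g := by simp
  map_smul' c f := hDUlin A B c f
  left_inv f := by
    apply DU.functor.map_injective
    simp
  right_inv g := by
    show (DU.functor.map (DU.functor.preimage g.op)).unop = g
    rw [DU.functor.map_preimage]; rfl

end Aux

/-- Let `k` be a field, `T`, `U` `k`-linear categories with `k`-linear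
involutive equivalences `D_T : T ≌ Tᵒᵖ`, `D_U : U ≌ Uᵒᵖ`, where `U` carries a shift.
Let `i^* : T ⥤ U` be a `k`-linear functor and `i^! := D_T ⋙ (i^*)ᵒᵖ ⋙ (D_U)⁻¹ : T ⥤ U`;
assume `i^! ≅ i^* ⋙ ⟦-n⟧` for some integer `n`. Let `P` be a self-dual object of `U` with
a natural isomorphism between `Z ↦ Hom_U(P, Z)` and `Z ↦ Hom_k(Hom_U(Z, P), k)`. Then for
every self-dual object `X` of `T` there is a `k`-linear isomorphism
`Hom_U(P, i^! X) ≅ Hom_k(Hom_U(P, (i^! X)⟦n⟧), k)`. -/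
theorem poincare_duality_shriek_selfdual
    (k : Type*) [Field k] {T U : Type*} [Category T] [Category U]
    [Preadditive T] [Preadditive U] [Linear k T] [Linear k U]
    (DT : T ≌ Tᵒᵖ) (DU : U ≌ Uᵒᵖ) [DT.functor.Additive] [DU.functor.Additive]
    (hDTlin : ∀ (X Y : T) (c : k) (f : X ⟶ Y),
      (DT.functor.map (c • f)).unop = c • (DT.functor.map f).unop)
    (hDUlin : ∀ (X Y : U) (c : k) (f : X ⟶ Y),
      (DU.functor.map (c • f)).unop = c • (DU.functor.map f).unop)
    (hDT : DT.IsInvolution) (hDU : DU.IsInvolution)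
    [HasShift U ℤ]
    (istar : T ⥤ U) [istar.Additive] [istar.Linear k] (n : ℤ)
    (hshift : DT.functor ⋙ istar.op ⋙ DU.inverse ≅ istar ⋙ shiftFunctor U (-n))
    (P : U) (hP : Nonempty ((DU.functor.obj P).unop ≅ P))
    (η : ∀ Z : U, (P ⟶ Z) ≃ₗ[k] ((Z ⟶ P) →ₗ[k] k))
    (hη : ∀ (Z Z' : U) (φ : Z ⟶ Z') (f : P ⟶ Z) (g : Z' ⟶ P),
      η Z' (f ≫ φ) g = η Z f (φ ≫ g)) :
    ∀ X : T, Nonempty ((DT.functor.obj X).unop ≅ X) →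
      Nonempty ((P ⟶ (DT.functor ⋙ istar.op ⋙ DU.inverse).obj X) ≃ₗ[k]
        ((P ⟶ (shiftFunctor U n).obj
          ((DT.functor ⋙ istar.op ⋙ DU.inverse).obj X)) →ₗ[k] k)) := by

  intro X hX
  obtain ⟨iX⟩ := hX
  obtain ⟨iP⟩ := hP
  set IX : U := (DT.functor ⋙ istar.op ⋙ DU.inverse).obj X with hIX
  -- dual of IX is istar X
  have iso2 : (DU.functor.obj IX).unop ≅ istar.obj X :=
    ((DU.counitIso.app (istar.op.obj (DT.functor.obj X))).unop).symm ≪≫ istar.mapIso iX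
  -- istar X is IX⟦n⟧
  have iso3 : istar.obj X ≅ (shiftFunctor U n).obj IX :=
    ((shiftFunctorCompIsoId U (-n) n (by ring)).app (istar.obj X)).symm ≪≫
      ((shiftFunctor U n).mapIso (hshift.app X)).symm
  have e2 : (IX ⟶ P) ≃ₗ[k] (P ⟶ (shiftFunctor U n).obj IX) :=
    (dualHomLin k DU hDUlin IX P).trans
      ((homCongrLin k iP iso2).trans (homCongrLin k (Iso.refl P) iso3))
  exact ⟨(η IX).trans (e2.arrowCongr (LinearEquiv.refl k k))⟩
end
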